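/- Generalized Kac formula: Let μ be a measure preserved by a measurable bijection θ and B ∈ 𝒜. Then ∫_B T_B dμ = μ({T̃_B < ∞}) and ∫_B T̃_B dμ = μ({T_B < ∞}), where the integrals are taken in [0,∞]. -/

import Mathlib

open MeasureTheory
open scoped ENNReal Classical
noncomputable section

/-- First hitting time `inf {n ≥ 1 : θ^n ω ∈ B}` valued in `ℕ∞` (`⊤` if never). -/
def hitT {Ω : Type*} (θ : Ω → Ω) (B : Set Ω) (ω : Ω) : ℕ∞ :=
  ⨅ (n : ℕ) (_ : 0 < n ∧ θ^[n] ω ∈ B), (n : ℕ∞)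

/-- Number of visits to `A` strictly before the hitting time of `B` (in `[0,∞]`). -/
def countM {Ω : Type*} (θ : Ω → Ω) (B A : Set Ω) (ω : Ω) : ℝ≥0∞ :=
  ∑' n : ℕ, if (n : ℕ∞) < hitT θ B ω ∧ θ^[n] ω ∈ A then 1 else 0

namespace KacAux
variable {Ω : Type*}

lemma hitT_eq (θ : Ω → Ω) (B : Set Ω) (ω : Ω) :
    hitT θ B ω = if h : ∃ n, 0 < n ∧ θ^[n] ω ∈ B then ((Nat.find h : ℕ) : ℕ∞) else ⊤ := by
  unfold hitT
  split_ifs with h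
  · refine le_antisymm (iInf_le_of_le (Nat.find h) (iInf_le_of_le (Nat.find_spec h) le_rfl)) ?_
    refine le_iInf fun n => le_iInf fun hn => ?_
    exact_mod_cast Nat.find_min' h hn
  · push_neg at h
    exact iInf_eq_top.2 fun n => iInf_eq_top.2 fun hn => absurd hn (by simpa using h n)

lemma lt_hitT (θ : Ω → Ω) (B : Set Ω) (ω : Ω) (n : ℕ) :
    (n : ℕ∞) < hitT θ B ω ↔ ∀ k, 0 < k → k ≤ n → θ^[k] ω ∉ B := by
  rw [hitT_eq]
  split_ifs with h
  · rw [Nat.cast_lt]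
    constructor
    · intro hlt k hk hkn hkB
      exact absurd (Nat.find_min' h ⟨hk, hkB⟩) (by omega)
    · intro H
      by_contra h'
      push_neg at h'
      exact H _ (Nat.find_spec h).1 h' (Nat.find_spec h).2
  · push_neg at h
    simp only [lt_top_iff_ne_top, ne_eq, ENat.coe_ne_top, not_false_iff, true_iff]
    exact fun k hk _ hkB => h k hk hkB

lemma hitT_pos (θ : Ω → Ω) (B : Set Ω) (ω : Ω) : (0 : ℕ∞) < hitT θ B ω :=
  (lt_hitT θ B ω 0).2 fun k hk hk0 _ => absurd (lt_of_lt_of_le hk hk0) (lt_irrefl 0)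

lemma hitT_lt_top (θ : Ω → Ω) (B : Set Ω) (ω : Ω) :
    hitT θ B ω < ⊤ ↔ ∃ n, 0 < n ∧ θ^[n] ω ∈ B := by
  rw [hitT_eq]
  split_ifs with h
  · simpa using h
  · simpa using h

lemma hitT_eq_coe (θ : Ω → Ω) (B : Set Ω) (ω : Ω) {n : ℕ} (hn : 0 < n) :
    hitT θ B ω = (n : ℕ∞) ↔ θ^[n] ω ∈ B ∧ ∀ k, 0 < k → k < n → θ^[k] ω ∉ B := by
  rw [hitT_eq]
  split_ifs with h
  · rw [Nat.cast_inj, Nat.find_eq_iff]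
    constructor
    · rintro ⟨⟨-, h1⟩, h2⟩
      exact ⟨h1, fun k hk hkn hB => h2 k hkn ⟨hk, hB⟩⟩
    · rintro ⟨h1, h2⟩
      exact ⟨⟨hn, h1⟩, fun m hm ⟨hm0, hmB⟩ => h2 m hm0 hm hmB⟩
  · refine iff_of_false (by simp) fun hB => h ⟨n, hn, hB.1⟩

lemma symm_iterate_apply (θ : Ω ≃ Ω) {k m : ℕ} (h : k ≤ m) (ω : Ω) :
    (⇑θ.symm)^[k] ((⇑θ)^[m] ω) = (⇑θ)^[m - k] ω := by
  conv_lhs => rw [show m = k + (m - k) by omega, Function.iterate_add_apply]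
  exact Function.LeftInverse.iterate θ.symm_apply_apply k _

lemma inv_iterate [MeasurableSpace Ω] (θ : Ω → Ω) (hθ : Measurable θ) (μ : Measure Ω)
    (hinv : ∀ A : Set Ω, MeasurableSet A → μ (θ ⁻¹' A) = μ A) (n : ℕ) :
    ∀ A : Set Ω, MeasurableSet A → μ (θ^[n] ⁻¹' A) = μ A := by
  induction n with
  | zero => simp
  | succ n ih =>
    intro A hA
    rw [Function.iterate_succ, Set.preimage_comp, hinv _ ((hθ.iterate n) hA), ih A hA]

lemma coe_enat_tsum (a : ℕ∞) :
    (a : ℝ≥0∞) = ∑' n : ℕ, if (n : ℕ∞) < a then (1 : ℝ≥0∞) else 0 := by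
  cases a with
  | top =>
    simp only [lt_top_iff_ne_top, ne_eq, ENat.coe_ne_top, not_false_iff, if_true]
    rw [ENNReal.tsum_const_eq_top_of_ne_zero one_ne_zero]
    simp
  | coe m =>
    rw [tsum_eq_sum (s := Finset.range m) (fun n hn => by
      simp only [Finset.mem_range, not_lt] at hn
      simp [(by exact_mod_cast not_lt.2 hn : ¬ ((n:ℕ∞) < m))])]
    have : ∀ n ∈ Finset.range m, (if (n : ℕ∞) < (m : ℕ∞) then (1:ℝ≥0∞) else 0) = 1 := by
      intro n hn
      simp only [Finset.mem_range] at hn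
      simp [Nat.cast_lt.2 hn]
    rw [Finset.sum_congr rfl this]
    simp

theorem kac_half {Ω : Type*} [MeasurableSpace Ω]
    (θ : Ω ≃ Ω) (hθ : Measurable θ) (hθ' : Measurable θ.symm)
    (μ : Measure Ω) (hinv : ∀ A : Set Ω, MeasurableSet A → μ (⇑θ ⁻¹' A) = μ A)
    (B : Set Ω) (hB : MeasurableSet B) :
    ∫⁻ ω in B, (hitT (⇑θ) B ω : ℝ≥0∞) ∂μ = μ {ω | hitT (⇑θ.symm) B ω < ⊤} := by
  -- inverse invariance
  have hinv' : ∀ A : Set Ω, MeasurableSet A → μ (⇑θ.symm ⁻¹' A) = μ A := by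
    intro A hA
    have h1 := hinv (⇑θ.symm ⁻¹' A) (hθ' hA)
    have h2 : ⇑θ ⁻¹' (⇑θ.symm ⁻¹' A) = A := by ext x; simp
    rw [h2] at h1
    exact h1.symm
  set F : Set Ω := {ω | hitT (⇑θ.symm) B ω < ⊤} with hFdef
  -- measurability of the relevant sets
  have hFwdSet : ∀ n : ℕ, MeasurableSet {ω | (n : ℕ∞) < hitT (⇑θ) B ω} := by
    intro n
    have : {ω | (n : ℕ∞) < hitT (⇑θ) B ω}
        = ⋂ k ∈ Finset.Icc 1 n, ((⇑θ)^[k] ⁻¹' B)ᶜ := by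
      ext ω
      simp only [Set.mem_setOf_eq, lt_hitT, Set.mem_iInter, Finset.mem_Icc,
        Set.mem_compl_iff, Set.mem_preimage]
      exact ⟨fun H k hk => H k hk.1 hk.2, fun H k h1 h2 => H k ⟨h1, h2⟩⟩
    rw [this]
    exact MeasurableSet.biInter (Set.to_countable _)
      (fun k _ => (((hθ.iterate k) hB).compl))
  have hEqSet : ∀ n : ℕ, MeasurableSet {ω | hitT (⇑θ.symm) B ω = ((n+1 : ℕ) : ℕ∞)} := by
    intro n
    have : {ω | hitT (⇑θ.symm) B ω = ((n+1 : ℕ) : ℕ∞)}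
        = ((⇑θ.symm)^[n+1] ⁻¹' B) ∩ ⋂ k ∈ Finset.Ico 1 (n+1), ((⇑θ.symm)^[k] ⁻¹' B)ᶜ := by
      ext ω
      simp only [Set.mem_setOf_eq, hitT_eq_coe (⇑θ.symm) B ω (Nat.succ_pos n),
        Set.mem_inter_iff, Set.mem_preimage, Set.mem_iInter, Finset.mem_Ico,
        Set.mem_compl_iff]
      exact ⟨fun ⟨h1, h2⟩ => ⟨h1, fun k hk => h2 k hk.1 hk.2⟩,
        fun ⟨h1, h2⟩ => ⟨h1, fun k hk1 hk2 => h2 k ⟨hk1, hk2⟩⟩⟩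
    rw [this]
    exact ((hθ'.iterate (n+1)) hB).inter
      (MeasurableSet.biInter (Set.to_countable _) fun k _ => ((hθ'.iterate k) hB).compl)
  have hF : MeasurableSet F := by
    have : F = ⋃ n : ℕ, (⇑θ.symm)^[n+1] ⁻¹' B := by
      ext ω
      simp only [hFdef, Set.mem_setOf_eq, hitT_lt_top, Set.mem_iUnion, Set.mem_preimage]
      constructor
      · rintro ⟨n, hn, hB'⟩
        exact ⟨n - 1, by rwa [show n - 1 + 1 = n by omega]⟩
      · rintro ⟨n, hn⟩
        exact ⟨n + 1, Nat.succ_pos _, hn⟩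
    rw [this]
    exact MeasurableSet.iUnion fun n => (hθ'.iterate (n+1)) hB
  -- the integral as a sum of measures
  have step1 : ∫⁻ ω in B, (hitT (⇑θ) B ω : ℝ≥0∞) ∂μ
      = ∑' n : ℕ, μ ({ω | (n : ℕ∞) < hitT (⇑θ) B ω} ∩ B) := by
    have e0 : ∫⁻ ω in B, (hitT (⇑θ) B ω : ℝ≥0∞) ∂μ
        = ∫⁻ ω in B, ∑' n : ℕ, (if (n : ℕ∞) < hitT (⇑θ) B ω then (1:ℝ≥0∞) else 0) ∂μ :=
      lintegral_congr fun ω => coe_enat_tsum _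
    rw [e0, lintegral_tsum (f := fun (n : ℕ) (ω : Ω) =>
        if (n : ℕ∞) < hitT (⇑θ) B ω then (1:ℝ≥0∞) else 0)
      (fun n => ((measurable_const.ite (hFwdSet n) measurable_const
        : Measurable fun ω => if (n : ℕ∞) < hitT (⇑θ) B ω then (1:ℝ≥0∞) else 0)).aemeasurable)]
    congr 1
    ext n
    have hind : ∀ ω, (if (n : ℕ∞) < hitT (⇑θ) B ω then (1:ℝ≥0∞) else 0)
        = Set.indicator {ω | (n : ℕ∞) < hitT (⇑θ) B ω} (fun _ => 1) ω := by
      intro ω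
      by_cases h : (n : ℕ∞) < hitT (⇑θ) B ω <;>
        simp [Set.indicator_apply, Set.mem_setOf_eq, h]
    simp_rw [hind]
    rw [lintegral_indicator (hFwdSet n), setLIntegral_one, Measure.restrict_apply (hFwdSet n)]
  -- split off n = 0 and shift each term by invariance
  have term0 : {ω | ((0:ℕ) : ℕ∞) < hitT (⇑θ) B ω} ∩ B = B := by
    ext ω
    simp only [Set.mem_inter_iff, Set.mem_setOf_eq, Nat.cast_zero, and_iff_right_iff_imp]
    exact fun _ => hitT_pos (⇑θ) B ω
  have termshift : ∀ n : ℕ,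
      μ ({ω | ((n+1 : ℕ) : ℕ∞) < hitT (⇑θ) B ω} ∩ B)
      = μ ({ω | hitT (⇑θ.symm) B ω = ((n+1 : ℕ) : ℕ∞)} ∩ Bᶜ) := by
    intro n
    set m := n + 1 with hm
    have hset : {ω | (m : ℕ∞) < hitT (⇑θ) B ω} ∩ B
        = (⇑θ)^[m] ⁻¹' ({ω | hitT (⇑θ.symm) B ω = (m : ℕ∞)} ∩ Bᶜ) := by
      ext ω
      simp only [Set.mem_inter_iff, Set.mem_setOf_eq, lt_hitT, Set.mem_preimage,
        Set.mem_compl_iff, hitT_eq_coe (⇑θ.symm) B _ (show 0 < m by omega)]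
      constructor
      · rintro ⟨H, hωB⟩
        refine ⟨⟨?_, ?_⟩, H m (Nat.succ_pos n) le_rfl⟩
        · rw [symm_iterate_apply θ le_rfl]
          simpa using hωB
        · intro k hk hkm
          rw [symm_iterate_apply θ hkm.le]
          exact H (m - k) (by omega) (by omega)
      · rintro ⟨⟨h1, h2⟩, h3⟩
        constructor
        · intro k hk hkm
          rcases eq_or_lt_of_le hkm with rfl | hlt
          · exact h3
          · have := h2 (m - k) (by omega) (by omega)
            rw [symm_iterate_apply θ (by omega : m - k ≤ m)] at this
            simpa [show m - (m - k) = k by omega] using this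
        · rw [symm_iterate_apply θ le_rfl] at h1
          simpa using h1
    rw [hset]
    exact inv_iterate (⇑θ) hθ μ hinv m _ ((hEqSet n).inter hB.compl)
  -- sum the tail into a single measure
  have tails : ∑' n : ℕ, μ ({ω | hitT (⇑θ.symm) B ω = ((n+1 : ℕ) : ℕ∞)} ∩ Bᶜ)
      = μ (F ∩ Bᶜ) := by
    have hdisj : Pairwise (Function.onFun Disjoint
        fun n : ℕ => {ω | hitT (⇑θ.symm) B ω = ((n+1 : ℕ) : ℕ∞)} ∩ Bᶜ) := by
      intro i j hij
      refine Set.disjoint_left.2 fun ω hi hj => hij ?_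
      have : ((i+1 : ℕ) : ℕ∞) = ((j+1 : ℕ) : ℕ∞) := hi.1.symm.trans hj.1
      exact_mod_cast Nat.succ_injective (by exact_mod_cast this)
    rw [← measure_iUnion hdisj fun n => (hEqSet n).inter hB.compl]
    congr 1
    ext ω
    simp only [Set.mem_iUnion, Set.mem_inter_iff, Set.mem_setOf_eq, Set.mem_compl_iff, hFdef]
    constructor
    · rintro ⟨n, hn, hωB⟩
      exact ⟨by rw [hn]; exact ENat.coe_lt_top _, hωB⟩
    · rintro ⟨hlt, hωB⟩
      rcases (hitT_lt_top (⇑θ.symm) B ω).1 hlt with ⟨n, hn, hB'⟩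
      have : hitT (⇑θ.symm) B ω ≠ ⊤ := hlt.ne
      rcases (WithTop.ne_top_iff_exists.1 this) with ⟨k, hk⟩
      have hk0 : 0 < k := by
        rcases Nat.eq_zero_or_pos k with rfl | hk0
        · have h := hitT_pos (⇑θ.symm) B ω
          rw [← hk] at h
          simp at h
          exact absurd h (lt_irrefl _)
        · exact hk0
      exact ⟨k - 1, by rw [show k - 1 + 1 = k by omega]; exact hk.symm, hωB⟩
  -- put the pieces together
  rw [step1, tsum_eq_zero_add' ENNReal.summable, term0]
  simp only [termshift]
  rw [tails]
  -- final bookkeeping:  μ B + μ (F ∩ Bᶜ) = μ F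
  rcases eq_or_ne (μ (B \ F)) 0 with h0 | h0
  · have hBsplit : μ B = μ (B ∩ F) := by
      rw [← measure_inter_add_diff B hF, h0, add_zero]
    rw [hBsplit, Set.inter_comm B F, ← Set.diff_eq]
    exact measure_inter_add_diff F hB
  · -- infinite case: μ F = ⊤
    have hW : MeasurableSet (B \ F) := hB.diff hF
    have hsub : ∀ k : ℕ, (⇑θ.symm)^[k+1] ⁻¹' (B \ F) ⊆ F := by
      intro k ω hω
      exact (hitT_lt_top (⇑θ.symm) B ω).2 ⟨k+1, Nat.succ_pos _, hω.1⟩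
    have hdisjV : Pairwise (Function.onFun Disjoint
        fun k : ℕ => (⇑θ.symm)^[k+1] ⁻¹' (B \ F)) := by
      have key : ∀ i j : ℕ, i < j →
          Disjoint ((⇑θ.symm)^[i+1] ⁻¹' (B \ F)) ((⇑θ.symm)^[j+1] ⁻¹' (B \ F)) := by
        intro i j hij
        refine Set.disjoint_left.2 fun ω ha hb => ?_
        have hab : (⇑θ.symm)^[j-i] ((⇑θ.symm)^[i+1] ω) = (⇑θ.symm)^[j+1] ω := by
          rw [← Function.iterate_add_apply]
          congr 1
          omega
        have : hitT (⇑θ.symm) B ((⇑θ.symm)^[i+1] ω) < ⊤ :=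
          (hitT_lt_top _ _ _).2 ⟨j - i, by omega, by rw [hab]; exact hb.1⟩
        exact ha.2 this
      intro i j hij
      rcases hij.lt_or_gt with h | h
      · exact key _ _ h
      · exact (key _ _ h).symm
    have hVmeas : ∀ k : ℕ, MeasurableSet ((⇑θ.symm)^[k+1] ⁻¹' (B \ F)) :=
      fun k => (hθ'.iterate (k+1)) hW
    have hFtop : μ F = ⊤ := by
      refine top_unique ?_
      have h1 : (⊤ : ℝ≥0∞) = ∑' k : ℕ, μ ((⇑θ.symm)^[k+1] ⁻¹' (B \ F)) := by
        have : ∀ k : ℕ, μ ((⇑θ.symm)^[k+1] ⁻¹' (B \ F)) = μ (B \ F) :=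
          fun k => inv_iterate (⇑θ.symm) hθ' μ hinv' (k+1) _ hW
        simp only [this]
        exact (ENNReal.tsum_const_eq_top_of_ne_zero h0).symm
      rw [h1, ← measure_iUnion hdisjV hVmeas]
      exact measure_mono (Set.iUnion_subset hsub)
    have hBsplit : μ B = μ (B ∩ F) + μ (B \ F) := (measure_inter_add_diff B hF).symm
    have h2 : μ (B ∩ F) + μ (F ∩ Bᶜ) = μ F := by
      rw [Set.inter_comm B F, ← Set.diff_eq]
      exact measure_inter_add_diff F hB
    rw [hBsplit, hFtop]
    rw [add_right_comm]
    rw [hFtop] at h2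
    rw [h2]
    exact top_add _

end KacAux


/-- Generalized Kac formula: `∫_B T_B dμ = μ(T̃_B < ∞)` and `∫_B T̃_B dμ = μ(T_B < ∞)`. -/
theorem generalized_kac {Ω : Type*} [MeasurableSpace Ω]
    (θ : Ω ≃ Ω) (hθ : Measurable θ) (hθ' : Measurable θ.symm)
    (μ : Measure Ω) (hinv : ∀ A : Set Ω, MeasurableSet A → μ (⇑θ ⁻¹' A) = μ A)
    (B : Set Ω) (hB : MeasurableSet B) :
    (∫⁻ ω in B, (hitT (⇑θ) B ω : ℝ≥0∞) ∂μ = μ {ω | hitT (⇑θ.symm) B ω < ⊤}) ∧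
    (∫⁻ ω in B, (hitT (⇑θ.symm) B ω : ℝ≥0∞) ∂μ = μ {ω | hitT (⇑θ) B ω < ⊤}) := by
  have hinv' : ∀ A : Set Ω, MeasurableSet A → μ (⇑θ.symm ⁻¹' A) = μ A := by
    intro A hA
    have h1 := hinv (⇑θ.symm ⁻¹' A) (hθ' hA)
    have h2 : ⇑θ ⁻¹' (⇑θ.symm ⁻¹' A) = A := by ext x; simp
    rw [h2] at h1
    exact h1.symm
  refine ⟨KacAux.kac_half θ hθ hθ' μ hinv B hB, ?_⟩
  have := KacAux.kac_half θ.symm hθ' (by simpa using hθ) μ hinv' B hB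
  simpa using this
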